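/- arXiv:1502.00670 — 5 statements merged into one kernel-verified Lean document; each statement's English description precedes it below -/
import Mathlib

section
/- Let T be a bounded operator on a complex Hilbert space H such that T*^l → 0 in the strong operator topology as l → ∞, and suppose that ∑_{k=0}^{2} (−1)^k (2 choose k) T^k T*^k = I − 2 T T* + T² T*² is a positive operator. Then I − T T* is positive, i.e., T is a contraction. -/
open ContinuousLinearMap Filter

/-- If `T*^l → 0` strongly and `I − 2TT* + T²T*² ≥ 0`, then `I − TT* ≥ 0`,
i.e. `T` is a contraction. -/
theorem statement5 {H : Type*} [NormedAddCommGroup H] [InnerProductSpace ℂ H]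
    [CompleteSpace H] (T : H →L[ℂ] H)
    (hC0 : ∀ h : H, Tendsto (fun l : ℕ => ((adjoint T) ^ l) h) atTop (nhds 0))
    (hpos : ((1 : H →L[ℂ] H) - (2 : ℂ) • (T * adjoint T) +
      T ^ 2 * (adjoint T) ^ 2).IsPositive) :
    ((1 : H →L[ℂ] H) - T * adjoint T).IsPositive := by
  set S := adjoint T with hS
  constructor
  · rw [← isSelfAdjoint_iff_isSymmetric]
    simp only [IsSelfAdjoint, star_sub, star_one, star_mul, star_eq_adjoint, hS,
      adjoint_adjoint]
  · intro x
    -- key inequality from hpos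
    have key : ∀ y : H, 0 ≤ ‖y‖ ^ 2 - 2 * ‖S y‖ ^ 2 + ‖S (S y)‖ ^ 2 := by
      intro y
      have h := hpos.2 y
      have e1 : (((1 : H →L[ℂ] H) - (2 : ℂ) • (T * S) + T ^ 2 * S ^ 2)) y
          = y - (2 : ℂ) • T (S y) + T (T (S (S y))) := by
        simp [pow_two, mul_apply, sub_apply, add_apply, smul_apply]
      have e2 : (inner ℂ (T (S y)) y : ℂ) = inner ℂ (S y) (S y) := by
        rw [hS, ← adjoint_inner_right]
      have e3 : (inner ℂ (T (T (S (S y)))) y : ℂ) = inner ℂ (S (S y)) (S (S y)) := by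
        rw [hS, ← adjoint_inner_right, ← adjoint_inner_right]
      rw [reApplyInnerSelf_apply, e1] at h
      rw [inner_add_left, inner_sub_left, inner_smul_left, e2, e3] at h
      simp only [inner_self_eq_norm_sq_to_K, map_ofNat, ← RCLike.ofReal_pow,
        map_sub, map_add, RCLike.mul_re, RCLike.ofNat_re, RCLike.ofNat_im,
        RCLike.ofReal_re, RCLike.ofReal_im] at h
      linarith [h]
    -- the sequence of differences
    set f : ℕ → ℝ := fun l => ‖(S ^ l) x‖ ^ 2 - ‖(S ^ (l + 1)) x‖ ^ 2 with hf
    have hstep : ∀ l, f (l + 1) ≤ f l := by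
      intro l
      have h := key ((S ^ l) x)
      have e1 : (S ^ (l + 1)) x = S ((S ^ l) x) := by
        rw [pow_succ']; rfl
      have e2 : (S ^ (l + 2)) x = S (S ((S ^ l) x)) := by
        rw [show l + 2 = (l + 1) + 1 by ring, pow_succ', ContinuousLinearMap.mul_apply, e1]
      simp only [hf, e1, e2]
      nlinarith [h]
    have hmono : ∀ l, f l ≤ f 0 := by
      intro l
      induction l with
      | zero => exact le_refl _
      | succ n ih => exact le_trans (hstep n) ih
    have hlim : Tendsto f atTop (nhds 0) := by
      have h1 : Tendsto (fun l : ℕ => ‖(S ^ l) x‖ ^ 2) atTop (nhds 0) := by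
        have := ((hC0 x).norm).pow 2
        simpa using this
      have h2 : Tendsto (fun l : ℕ => ‖(S ^ (l + 1)) x‖ ^ 2) atTop (nhds 0) :=
        h1.comp (tendsto_add_atTop_nat 1)
      simpa [hf] using h1.sub h2
    have h0 : (0 : ℝ) ≤ f 0 :=
      le_of_tendsto hlim (Eventually.of_forall hmono)
    have e1 : (((1 : H →L[ℂ] H) - T * S)) x = x - T (S x) := by
      simp [mul_apply, sub_apply]
    have e2 : (inner ℂ (T (S x)) x : ℂ) = inner ℂ (S x) (S x) := by
      rw [hS, ← adjoint_inner_right]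
    rw [reApplyInnerSelf_apply, e1, inner_sub_left, e2]
    simp only [inner_self_eq_norm_sq_to_K, ← RCLike.ofReal_pow,
      ← RCLike.ofReal_sub, RCLike.ofReal_re]
    have hf0 : f 0 = ‖x‖ ^ 2 - ‖S x‖ ^ 2 := by simp [hf, pow_one]
    linarith [hf0 ▸ h0]
end

section
/- Let T be a bounded operator on a complex Hilbert space H with T*^l → 0 strongly, and suppose D² := ∑_{k=0}^{m} (−1)^k (m choose k) T^k T*^k ≥ 0 for some integer m ≥ 1. Then for every h ∈ H, ∑_{k=0}^{∞} (m+k−1 choose k) ⟨T^k D² T*^k h, h⟩ = ‖h‖²; equivalently, ∑_{k=0}^∞ (m+k−1 choose k) ‖D T*^k h‖² = ‖h‖², where D is the positive square root of D². -/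
open ContinuousLinearMap Filter Finset
namespace Statement6Aux
variable {H : Type*} [NormedAddCommGroup H] [InnerProductSpace ℂ H] [CompleteSpace H]

noncomputable def Δ (T : H →L[ℂ] H) (p : ℕ) : H →L[ℂ] H :=
  ∑ k ∈ range (p + 1), ((-1 : ℂ) ^ k * (p.choose k : ℂ)) • (T ^ k * (adjoint T) ^ k)

lemma delta_zero (T : H →L[ℂ] H) : Δ T 0 = 1 := by
  simp [Δ]

lemma delta_succ (T : H →L[ℂ] H) (p : ℕ) :
    Δ T (p + 1) = Δ T p - T * Δ T p * adjoint T := by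
  set X : ℕ → (H →L[ℂ] H) := fun k => T ^ k * (adjoint T) ^ k with hX
  set c : ℕ → ℂ := fun k => (-1 : ℂ) ^ k * (p.choose k : ℂ) with hc
  have hmul : ∀ (a : ℂ) (k : ℕ),
      T * (a • X k) * adjoint T = a • X (k + 1) := by
    intro a k
    simp only [mul_smul_comm, smul_mul_assoc, hX]
    congr 1
    rw [pow_succ' T k, pow_succ (adjoint T) k]
    simp [mul_assoc]
  have hTΔ : T * Δ T p * adjoint T = ∑ k ∈ range (p + 1), c k • X (k + 1) := by
    rw [Δ, Finset.mul_sum, Finset.sum_mul]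
    exact Finset.sum_congr rfl fun k _ => hmul _ k
  have hΔp : Δ T p = (∑ k ∈ range (p + 1), c (k + 1) • X (k + 1)) + c 0 • X 0 := by
    rw [Δ, Finset.sum_range_succ' (fun k => c k • X k) p]
    congr 1
    rw [Finset.sum_range_succ]
    have : c (p + 1) = 0 := by simp [hc, Nat.choose_succ_self]
    simp [this]
  have hΔp1 : Δ T (p + 1)
      = (∑ k ∈ range (p + 1), ((-1 : ℂ) ^ (k+1) * ((p+1).choose (k+1) : ℂ)) • X (k + 1))
        + c 0 • X 0 := by
    rw [Δ, Finset.sum_range_succ' (fun k => ((-1:ℂ)^k * ((p+1).choose k : ℂ)) • X k) (p+1)]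
    simp [hc]
  rw [hΔp1, hTΔ, hΔp, add_sub_right_comm, ← Finset.sum_sub_distrib]
  congr 1
  refine Finset.sum_congr rfl fun k _ => ?_
  rw [← sub_smul]
  congr 1
  simp only [hc]
  push_cast [Nat.choose_succ_succ]
  ring

/-- `w T p k h = re ⟪Δ_p T*^k h, T*^k h⟫`. -/
noncomputable def w (T : H →L[ℂ] H) (p k : ℕ) (h : H) : ℝ :=
  RCLike.re (inner ℂ (Δ T p (((adjoint T) ^ k) h)) (((adjoint T) ^ k) h) : ℂ)

lemma w_shift (T : H →L[ℂ] H) (p k : ℕ) (h : H) :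
    w T p k (adjoint T h) = w T p (k + 1) h := by
  simp [w, pow_succ, ContinuousLinearMap.mul_apply]

lemma w_zero (T : H →L[ℂ] H) (k : ℕ) (h : H) :
    w T 0 k h = ‖((adjoint T) ^ k) h‖ ^ 2 := by
  simp [w, delta_zero, inner_self_eq_norm_sq]
  rw [← Complex.ofReal_pow, Complex.ofReal_re]

lemma w_succ (T : H →L[ℂ] H) (p k : ℕ) (h : H) :
    w T (p + 1) k h = w T p k h - w T p (k + 1) h := by
  have hg : ((adjoint T) ^ (k + 1)) h = adjoint T (((adjoint T) ^ k) h) := by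
    rw [pow_succ', ContinuousLinearMap.mul_apply]
  rw [w, w, w, delta_succ, hg]
  simp only [ContinuousLinearMap.sub_apply, inner_sub_left, map_sub, ContinuousLinearMap.mul_apply]
  rw [← adjoint_inner_right T]

lemma sum_w_succ (T : H →L[ℂ] H) (p N : ℕ) (h : H) :
    ∑ k ∈ range N, w T (p + 1) k h = w T p 0 h - w T p N h := by
  induction N with
  | zero => simp
  | succ n ih => rw [Finset.sum_range_succ, ih, w_succ]; ring

lemma w_tendsto_zero (T : H →L[ℂ] H)
    (hC0 : ∀ h : H, Tendsto (fun l : ℕ => ((adjoint T) ^ l) h) atTop (nhds 0))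
    (p : ℕ) (h : H) : Tendsto (fun N => w T p N h) atTop (nhds 0) := by
  have hcont : Continuous fun x : H => RCLike.re (inner ℂ (Δ T p x) x : ℂ) :=
    RCLike.continuous_re.comp (Continuous.inner ((Δ T p).continuous) continuous_id)
  have h0 : RCLike.re (inner ℂ (Δ T p (0 : H)) (0 : H) : ℂ) = 0 := by simp
  have := (hcont.tendsto' 0 0 h0).comp (hC0 h)
  exact this

lemma delta_nonneg (T : H →L[ℂ] H)
    (hC0 : ∀ h : H, Tendsto (fun l : ℕ => ((adjoint T) ^ l) h) atTop (nhds 0))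
    (m : ℕ) (hApos : ∀ g : H, 0 ≤ RCLike.re (inner ℂ (Δ T m g) g : ℂ)) :
    ∀ p, p ≤ m → ∀ g : H, 0 ≤ RCLike.re (inner ℂ (Δ T p g) g : ℂ) := by
  have key : ∀ d p, p + d = m → ∀ g : H, 0 ≤ RCLike.re (inner ℂ (Δ T p g) g : ℂ) := by
    intro d
    induction d with
    | zero => intro p hp g; rw [add_zero] at hp; subst hp; exact hApos g
    | succ d ih =>
      intro p hp g
      have ih' : ∀ x : H, 0 ≤ RCLike.re (inner ℂ (Δ T (p + 1) x) x : ℂ) := by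
        intro x; exact ih (p + 1) (by omega) x
      have hw1 : ∀ k, 0 ≤ w T (p + 1) k g := fun k => ih' _
      have hle : ∀ N, w T p N g ≤ w T p 0 g := by
        intro N
        have := sum_w_succ T p N g
        have hs : 0 ≤ ∑ k ∈ range N, w T (p + 1) k g :=
          Finset.sum_nonneg fun k _ => hw1 k
        linarith [this ▸ hs]
      have h0 : (0 : ℝ) ≤ w T p 0 g :=
        le_of_tendsto' (w_tendsto_zero T hC0 p g) hle
      simpa [w] using h0
  intro p hp g
  exact key (m - p) p (by omega) g

lemma abel (T : H →L[ℂ] H) (r : ℕ) (h : H) (N : ℕ) :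
    ∑ k ∈ range (N + 1), ((r + 1 + k).choose k : ℝ) * w T (r + 2) k h
      = ∑ k ∈ range (N + 1), ((r + k).choose k : ℝ) * w T (r + 1) k h
        - ((r + 1 + N).choose N : ℝ) * w T (r + 1) (N + 1) h := by
  induction N with
  | zero =>
    simp [w_succ T (r + 1) 0 h]
  | succ N ih =>
    rw [Finset.sum_range_succ, ih, Finset.sum_range_succ
      (fun k => ((r + k).choose k : ℝ) * w T (r + 1) k h) (N + 1)]
    rw [w_succ T (r + 1) (N + 1) h]
    have e1 : r + 1 + (N + 1) = (r + N + 1) + 1 := by ring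
    have e2 : r + (N + 1) = r + N + 1 := by ring
    have hpascal : (((r + N + 1) + 1).choose (N + 1) : ℝ)
        = ((r + N + 1).choose N : ℝ) + ((r + N + 1).choose (N + 1) : ℝ) := by
      rw [Nat.choose_succ_succ (r + N + 1) N]; push_cast; ring
    rw [e1, e2] at *
    have e3 : r + 1 + N = r + N + 1 := by ring
    rw [e3, hpascal]
    ring

lemma norm_sq_pow_tendsto (T : H →L[ℂ] H)
    (hC0 : ∀ h : H, Tendsto (fun l : ℕ => ((adjoint T) ^ l) h) atTop (nhds 0)) (h : H) :
    Tendsto (fun N : ℕ => ‖((adjoint T) ^ N) h‖ ^ 2) atTop (nhds 0) := by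
  have hcont : Continuous fun x : H => ‖x‖ ^ 2 := by continuity
  have h0 : ‖(0 : H)‖ ^ 2 = 0 := by simp
  exact (hcont.tendsto' 0 0 h0).comp (hC0 h)

lemma main (T : H →L[ℂ] H)
    (hC0 : ∀ h : H, Tendsto (fun l : ℕ => ((adjoint T) ^ l) h) atTop (nhds 0))
    (m : ℕ) (hApos : ∀ g : H, 0 ≤ RCLike.re (inner ℂ (Δ T m g) g : ℂ)) :
    ∀ q, q + 1 ≤ m → ∀ h : H,
      HasSum (fun k => ((q + k).choose k : ℝ) * w T (q + 1) k h) (‖h‖ ^ 2) := by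
  intro q
  induction q with
  | zero =>
    intro hq h
    have hnn : ∀ k, 0 ≤ w T 1 k h := fun k =>
      delta_nonneg T hC0 m hApos 1 hq _
    have hnn' : ∀ k, 0 ≤ ((0 + k).choose k : ℝ) * w T 1 k h := by
      intro k; exact mul_nonneg (by positivity) (hnn k)
    rw [hasSum_iff_tendsto_nat_of_nonneg hnn' _]
    have heq : ∀ N, ∑ k ∈ range N, ((0 + k).choose k : ℝ) * w T 1 k h
        = ‖h‖ ^ 2 - ‖((adjoint T) ^ N) h‖ ^ 2 := by
      intro N
      have : ∀ k, ((0 + k).choose k : ℝ) * w T 1 k h = w T (0 + 1) k h := by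
        intro k; simp [Nat.choose_self]
      rw [Finset.sum_congr rfl fun k _ => this k, sum_w_succ T 0 N h, w_zero, w_zero]
      simp
    simp only [heq]
    have := (norm_sq_pow_tendsto T hC0 h).const_sub (‖h‖ ^ 2)
    simpa using this
  | succ q ih =>
    intro hq h
    have ihs : ∀ g : H, HasSum (fun k => ((q + k).choose k : ℝ) * w T (q + 1) k g) (‖g‖ ^ 2) :=
      fun g => ih (by omega) g
    -- nonnegativity
    have hwnn : ∀ (g : H) (p : ℕ), p ≤ m → ∀ k, 0 ≤ w T p k g := fun g p hp k =>
      delta_nonneg T hC0 m hApos p hp _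
    have hfnn : ∀ (g : H) (k : ℕ), 0 ≤ ((q + 1 + k).choose k : ℝ) * w T (q + 2) k g := by
      intro g k
      have := hwnn g (q + 2) hq k
      positivity
    -- partial sums bounded by ‖g‖²
    have hbound : ∀ (g : H) (N : ℕ),
        ∑ k ∈ range N, ((q + 1 + k).choose k : ℝ) * w T (q + 2) k g ≤ ‖g‖ ^ 2 := by
      intro g N
      cases N with
      | zero => simp only [range_zero, sum_empty]; exact sq_nonneg _
      | succ M =>
        rw [abel T q g M]
        have h1 : ∑ k ∈ range (M + 1), ((q + k).choose k : ℝ) * w T (q + 1) k g ≤ ‖g‖ ^ 2 :=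
          sum_le_hasSum _ (fun k _ => by
            have := hwnn g (q + 1) (by omega) k; positivity) (ihs g)
        have h2 : 0 ≤ ((q + 1 + M).choose M : ℝ) * w T (q + 1) (M + 1) g := by
          have := hwnn g (q + 1) (by omega) (M + 1); positivity
        linarith
    have hsummable : ∀ g : H,
        Summable (fun k => ((q + 1 + k).choose k : ℝ) * w T (q + 2) k g) := fun g =>
      summable_of_sum_range_le (hfnn g) (hbound g)
    set L : H → ℝ := fun g => ∑' k, ((q + 1 + k).choose k : ℝ) * w T (q + 2) k g with hL
    have hhasL : ∀ g : H,
        HasSum (fun k => ((q + 1 + k).choose k : ℝ) * w T (q + 2) k g) (L g) := fun g =>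
      (hsummable g).hasSum
    have hLle : ∀ g : H, L g ≤ ‖g‖ ^ 2 := fun g =>
      Summable.tsum_le_of_sum_range_le (hsummable g) (hbound g)
    have hLnn : ∀ g : H, 0 ≤ L g := fun g => tsum_nonneg (hfnn g)
    -- the remainder ρ
    set ρ : ℕ → H → ℝ := fun N g => ((q + 1 + N).choose N : ℝ) * w T (q + 1) (N + 1) g with hρ
    have hρ_tendsto : ∀ g : H, Tendsto (fun N => ρ N g) atTop (nhds (‖g‖ ^ 2 - L g)) := by
      intro g
      have heq : ∀ N, ρ N g
          = ∑ k ∈ range (N + 1), ((q + k).choose k : ℝ) * w T (q + 1) k g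
            - ∑ k ∈ range (N + 1), ((q + 1 + k).choose k : ℝ) * w T (q + 2) k g := by
        intro N
        have := abel T q g N
        simp only [hρ]
        linarith
      have t1 : Tendsto (fun N : ℕ =>
          ∑ k ∈ range (N + 1), ((q + k).choose k : ℝ) * w T (q + 1) k g)
          atTop (nhds (‖g‖ ^ 2)) :=
        ((ihs g).tendsto_sum_nat).comp (tendsto_add_atTop_nat 1)
      have t2 : Tendsto (fun N : ℕ =>
          ∑ k ∈ range (N + 1), ((q + 1 + k).choose k : ℝ) * w T (q + 2) k g)
          atTop (nhds (L g)) :=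
        ((hhasL g).tendsto_sum_nat).comp (tendsto_add_atTop_nat 1)
      simp only [heq]
      exact t1.sub t2
    -- shift invariance of ψ g = ‖g‖² - L g
    have hshift : ∀ g : H, ‖adjoint T g‖ ^ 2 - L (adjoint T g) = ‖g‖ ^ 2 - L g := by
      intro g
      have hratio : ∀ N : ℕ, ρ N (adjoint T g)
          = (((N : ℝ) + 1) / ((N : ℝ) + (q + 2))) * ρ (N + 1) g := by
        intro N
        have hw : w T (q + 1) (N + 1) (adjoint T g) = w T (q + 1) (N + 2) g := by
          rw [w_shift]
        have hnat : ((q + 1 + N) + 1) * ((q + 1 + N).choose N)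
            = ((q + 1 + N) + 1).choose (N + 1) * (N + 1) := by
          exact Nat.add_one_mul_choose_eq (q + 1 + N) N
        have hpos : ((N : ℝ) + (q + 2)) ≠ 0 := by positivity
        have hcast : ((q : ℝ) + 1 + (N : ℝ) + 1) * ((q + 1 + N).choose N : ℝ)
            = (((q + 1 + N) + 1).choose (N + 1) : ℝ) * ((N : ℝ) + 1) := by
          have := congrArg (fun n : ℕ => (n : ℝ)) hnat
          push_cast at this
          linarith
        simp only [hρ, hw]
        have e : q + 1 + (N + 1) = (q + 1 + N) + 1 := by ring
        rw [e]
        have hww : w T (q + 1) (N + 1 + 1) g = w T (q + 1) (N + 2) g := rfl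
        rw [hww]
        field_simp
        linear_combination (w T (q + 1) (N + 2) g) * hcast
      have t1 : Tendsto (fun N => ρ N (adjoint T g)) atTop
          (nhds (‖adjoint T g‖ ^ 2 - L (adjoint T g))) := hρ_tendsto (adjoint T g)
      have tratio : Tendsto (fun N : ℕ => ((N : ℝ) + 1) / ((N : ℝ) + (q + 2)))
          atTop (nhds 1) := by
        have hden : Tendsto (fun N : ℕ => (N : ℝ) + (q + 2)) atTop atTop :=
          tendsto_atTop_add_const_right atTop _ tendsto_natCast_atTop_atTop
        have hzero : Tendsto (fun N : ℕ => ((q : ℝ) + 1) / ((N : ℝ) + (q + 2)))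
            atTop (nhds 0) := Tendsto.div_atTop tendsto_const_nhds hden
        have heq2 : ∀ᶠ N : ℕ in atTop, ((N : ℝ) + 1) / ((N : ℝ) + (q + 2))
            = 1 - ((q : ℝ) + 1) / ((N : ℝ) + (q + 2)) := by
          filter_upwards with N
          have hpos : ((N : ℝ) + (q + 2)) ≠ 0 := by positivity
          field_simp
          ring
        rw [tendsto_congr' heq2]
        simpa using (tendsto_const_nhds (x := (1:ℝ)) (f := atTop)).sub hzero
      have t2 : Tendsto (fun N => ρ N (adjoint T g)) atTop (nhds (1 * (‖g‖ ^ 2 - L g))) := by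
        simp only [hratio]
        exact tratio.mul ((hρ_tendsto g).comp (tendsto_add_atTop_nat 1))
      rw [one_mul] at t2
      exact tendsto_nhds_unique t1 t2
    -- iterate the shift
    have hiter : ∀ j : ℕ, ‖((adjoint T) ^ j) h‖ ^ 2 - L (((adjoint T) ^ j) h)
        = ‖h‖ ^ 2 - L h := by
      intro j
      induction j with
      | zero => simp
      | succ j ihj =>
        have : ((adjoint T) ^ (j + 1)) h = adjoint T (((adjoint T) ^ j) h) := by
          rw [pow_succ', ContinuousLinearMap.mul_apply]
        rw [this, hshift, ihj]
    -- conclude ψ h = 0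
    have hle0 : ‖h‖ ^ 2 - L h ≤ 0 := by
      have hb : ∀ j : ℕ, ‖h‖ ^ 2 - L h ≤ ‖((adjoint T) ^ j) h‖ ^ 2 := by
        intro j
        rw [← hiter j]
        have := hLnn (((adjoint T) ^ j) h)
        linarith
      exact ge_of_tendsto' (norm_sq_pow_tendsto T hC0 h) hb
    have hge0 : 0 ≤ ‖h‖ ^ 2 - L h := by have := hLle h; linarith
    have hLh : L h = ‖h‖ ^ 2 := by linarith
    rw [← hLh]
    exact hhasL h

end Statement6Aux

open Statement6Aux in
/-- If `T*^l → 0` strongly and the defect operator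
`D² = ∑_{k=0}^m (−1)^k (m choose k) T^k T*^k` is positive (`m ≥ 1`), then for every
`h ∈ H`, `∑_{k=0}^∞ (m+k−1 choose k) ⟨T^k D² T*^k h, h⟩ = ‖h‖²`; equivalently
`∑_{k=0}^∞ (m+k−1 choose k) ‖D T*^k h‖² = ‖h‖²`, where `D` is the positive square
root of `D²`. -/
theorem statement6 {H : Type*} [NormedAddCommGroup H] [InnerProductSpace ℂ H]
    [CompleteSpace H] (T : H →L[ℂ] H) (m : ℕ) (hm : 1 ≤ m)
    (hC0 : ∀ h : H, Tendsto (fun l : ℕ => ((adjoint T) ^ l) h) atTop (nhds 0))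
    (A : H →L[ℂ] H)
    (hA : A = ∑ k ∈ range (m + 1),
      ((-1 : ℂ) ^ k * (m.choose k : ℂ)) • (T ^ k * (adjoint T) ^ k))
    (hApos : A.IsPositive)
    (D : H →L[ℂ] H) (hDpos : D.IsPositive) (hD : D * D = A) :
    ∀ h : H,
      HasSum (fun k : ℕ =>
        (((m + k - 1).choose k : ℝ)) *
          RCLike.re (inner ℂ ((T ^ k * A * (adjoint T) ^ k) h) h : ℂ)) (‖h‖ ^ 2) ∧
      HasSum (fun k : ℕ =>
        (((m + k - 1).choose k : ℝ)) * ‖D (((adjoint T) ^ k) h)‖ ^ 2) (‖h‖ ^ 2) := by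
  intro h
  have hΔA : Δ T m = A := by rw [hA]; rfl
  have hApos' : ∀ g : H, 0 ≤ RCLike.re (inner ℂ (Δ T m g) g : ℂ) := by
    intro g; rw [hΔA]; exact hApos.re_inner_nonneg_left g
  obtain ⟨q, rfl⟩ : ∃ q, m = q + 1 := ⟨m - 1, by omega⟩
  have hmain : HasSum (fun k => ((q + k).choose k : ℝ) * w T (q + 1) k h) (‖h‖ ^ 2) :=
    main T hC0 (q + 1) hApos' q le_rfl h
  have hchoose : ∀ k : ℕ, (q + 1) + k - 1 = q + k := by intro k; omega
  have hw_eq : ∀ k : ℕ, w T (q + 1) k h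
      = RCLike.re (inner ℂ (A (((adjoint T) ^ k) h)) (((adjoint T) ^ k) h) : ℂ) := by
    intro k; rw [w, hΔA]
  constructor
  · have hfun : (fun k : ℕ => (((q + 1) + k - 1).choose k : ℝ) *
        RCLike.re (inner ℂ ((T ^ k * A * (adjoint T) ^ k) h) h : ℂ))
        = fun k => ((q + k).choose k : ℝ) * w T (q + 1) k h := by
      funext k
      rw [hchoose k, hw_eq k]
      congr 2
      have happ : (T ^ k * A * (adjoint T) ^ k) h
          = (T ^ k) (A (((adjoint T) ^ k) h)) := rfl
      rw [happ]
      have hadj : adjoint (T ^ k) = (adjoint T) ^ k := by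
        rw [← star_eq_adjoint, star_pow, star_eq_adjoint]
      rw [← hadj, ← adjoint_inner_right]
    rw [hfun]
    exact hmain
  · have hfun : (fun k : ℕ => (((q + 1) + k - 1).choose k : ℝ) *
        ‖D (((adjoint T) ^ k) h)‖ ^ 2)
        = fun k => ((q + k).choose k : ℝ) * w T (q + 1) k h := by
      funext k
      rw [hchoose k, hw_eq k]
      congr 1
      set g : H := ((adjoint T) ^ k) h
      rw [← hD, ContinuousLinearMap.mul_apply, ← adjoint_inner_right D,
        hDpos.isSelfAdjoint.adjoint_eq, inner_self_eq_norm_sq]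
    rw [hfun]
    exact hmain
end

section
/- Let T₁, T₂ be doubly commuting bounded operators on a complex Hilbert space H with positive defect operators A_i = ∑_{k=0}^{m_i} (−1)^k (m_i choose k) T_i^k T_i*^k ≥ 0 (i = 1, 2). Then the joint defect operator ∑_{j=0}^{m₂} ∑_{k=0}^{m₁} (−1)^{j+k} (m₂ choose j)(m₁ choose k) T₂^j T₁^k T₁*^k T₂*^j equals A₁ A₂ = A₂ A₁; in particular it is positive, and its positive square root equals D₁ D₂ where D_i = A_i^{1/2}. -/
open ContinuousLinearMap Finset
set_option maxHeartbeats 1000000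
set_option synthInstance.maxHeartbeats 400000

lemma aux_commute_sqrt {H : Type*} [NormedAddCommGroup H] [InnerProductSpace ℂ H]
    [CompleteSpace H] {a b : H →L[ℂ] H} (ha : 0 ≤ a) (hb : IsSelfAdjoint b)
    (hab : Commute b a) : Commute b (CFC.sqrt a) := by
  have hsa : IsSelfAdjoint a := .of_nonneg ha
  have hna : IsStarNormal a := hsa.isStarNormal
  have hmem : CFC.sqrt a ∈ StarAlgebra.elemental ℂ a := by
    have h1 : CFC.sqrt a
        = cfc (fun x : ℂ => ((NNReal.sqrt (Real.toNNReal x.re) : ℝ) : ℂ)) a := by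
      rw [CFC.sqrt_eq_cfc, cfc_nnreal_eq_real _ _ ha, cfc_real_eq_complex _ hsa]
    rw [h1]
    by_cases hcont : ContinuousOn
        (fun x : ℂ => ((NNReal.sqrt (Real.toNNReal x.re) : ℝ) : ℂ)) (spectrum ℂ a)
    · rw [cfc_apply _ a hna hcont, cfcHom_eq_of_isStarNormal]
      exact SetLike.coe_mem _
    · rw [cfc_apply_of_not_continuousOn a hcont]; exact zero_mem _
  have hcent : a ∈ StarSubalgebra.centralizer ℂ {b} := by
    rw [StarSubalgebra.mem_centralizer_iff]
    rintro g hg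
    rw [Set.mem_singleton_iff] at hg
    subst hg
    exact ⟨hab.eq, by rw [hb.star_eq]; exact hab.eq⟩
  have hclosed : IsClosed
      ((StarSubalgebra.centralizer ℂ {b} : StarSubalgebra ℂ (H →L[ℂ] H)) : Set (H →L[ℂ] H)) := by
    rw [StarSubalgebra.coe_centralizer]
    have heq : (({b} ∪ star {b}) : Set (H →L[ℂ] H)).centralizer
        = ⋂ m ∈ (({b} ∪ star {b}) : Set (H →L[ℂ] H)), {z | m * z = z * m} := by
      ext z
      rw [Set.mem_centralizer_iff]
      simp only [Set.mem_iInter, Set.mem_setOf_eq]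
    rw [heq]
    exact isClosed_biInter fun m _ => isClosed_eq (continuous_mul_left m) (continuous_mul_right m)
  have hle := StarAlgebra.elemental.le_of_mem (R := ℂ) hclosed hcent hmem
  rw [StarSubalgebra.mem_centralizer_iff] at hle
  exact (hle b (Set.mem_singleton b)).1

/-- For doubly commuting `T₁, T₂` with positive defect operators `A₁, A₂`, the joint
defect operator `∑_{j,k} (−1)^{j+k} (m₂ choose j)(m₁ choose k) T₂^j T₁^k T₁*^k T₂*^j`
equals `A₁ A₂ = A₂ A₁`; in particular it is positive and its positive square root is
`D₁ D₂` where `D_i = A_i^{1/2}`. -/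
theorem statement9 {H : Type*} [NormedAddCommGroup H] [InnerProductSpace ℂ H]
    [CompleteSpace H] (T₁ T₂ : H →L[ℂ] H)
    (hcomm : T₁ * T₂ = T₂ * T₁) (hdcomm : T₁ * adjoint T₂ = adjoint T₂ * T₁)
    (m₁ m₂ : ℕ) (hm₁ : 1 ≤ m₁) (hm₂ : 1 ≤ m₂)
    (A₁ A₂ : H →L[ℂ] H)
    (hA₁ : A₁ = ∑ k ∈ range (m₁ + 1),
      ((-1 : ℂ) ^ k * (m₁.choose k : ℂ)) • (T₁ ^ k * (adjoint T₁) ^ k))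
    (hA₂ : A₂ = ∑ k ∈ range (m₂ + 1),
      ((-1 : ℂ) ^ k * (m₂.choose k : ℂ)) • (T₂ ^ k * (adjoint T₂) ^ k))
    (hA₁pos : A₁.IsPositive) (hA₂pos : A₂.IsPositive)
    (D₁ D₂ : H →L[ℂ] H)
    (hD₁pos : D₁.IsPositive) (hD₁ : D₁ * D₁ = A₁)
    (hD₂pos : D₂.IsPositive) (hD₂ : D₂ * D₂ = A₂) :
    (∑ j ∈ range (m₂ + 1), ∑ k ∈ range (m₁ + 1),
        ((-1 : ℂ) ^ (j + k) * (m₂.choose j : ℂ) * (m₁.choose k : ℂ)) •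
          (T₂ ^ j * T₁ ^ k * (adjoint T₁) ^ k * (adjoint T₂) ^ j)) = A₁ * A₂ ∧
    A₁ * A₂ = A₂ * A₁ ∧
    (A₁ * A₂).IsPositive ∧
    (D₁ * D₂).IsPositive ∧ (D₁ * D₂) * (D₁ * D₂) = A₁ * A₂ := by
  -- basic commutation relations
  have c12 : Commute T₁ T₂ := hcomm
  have c1s2 : Commute T₁ (adjoint T₂) := hdcomm
  have cs1s2 : Commute (adjoint T₁) (adjoint T₂) := by
    have := congrArg star hcomm
    simp only [star_mul, star_eq_adjoint] at this
    exact this.symm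
  have cs12 : Commute (adjoint T₁) T₂ := by
    have := congrArg star hdcomm
    simp only [star_mul, star_eq_adjoint, adjoint_adjoint] at this
    exact this.symm
  set S₁ := adjoint T₁ with hS₁
  set S₂ := adjoint T₂ with hS₂
  -- each summand of A₂ commutes with each summand of A₁
  have hQ1 : ∀ j k : ℕ, Commute (T₂ ^ j) (T₁ ^ k * S₁ ^ k) := fun j k =>
    ((c12.symm.pow_pow j k).mul_right (cs12.symm.pow_pow j k))
  have hQ2 : ∀ j k : ℕ, Commute (S₂ ^ j) (T₁ ^ k * S₁ ^ k) := fun j k =>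
    ((c1s2.symm.pow_pow j k).mul_right (cs1s2.symm.pow_pow j k))
  have hPQ : ∀ k j : ℕ, Commute (T₁ ^ k * S₁ ^ k) (T₂ ^ j * S₂ ^ j) := fun k j =>
    ((hQ1 j k).symm.mul_right (hQ2 j k).symm)
  have hterm : ∀ j k : ℕ, T₂ ^ j * T₁ ^ k * S₁ ^ k * S₂ ^ j
      = (T₁ ^ k * S₁ ^ k) * (T₂ ^ j * S₂ ^ j) := fun j k => by
    rw [mul_assoc (T₂ ^ j), (hQ1 j k).eq, mul_assoc]
  -- goal 1
  have goal1 : (∑ j ∈ range (m₂ + 1), ∑ k ∈ range (m₁ + 1),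
        ((-1 : ℂ) ^ (j + k) * (m₂.choose j : ℂ) * (m₁.choose k : ℂ)) •
          (T₂ ^ j * T₁ ^ k * S₁ ^ k * S₂ ^ j)) = A₁ * A₂ := by
    rw [hA₁, hA₂, Finset.sum_mul_sum, Finset.sum_comm]
    refine Finset.sum_congr rfl fun j _ => Finset.sum_congr rfl fun k _ => ?_
    rw [hterm k j, smul_mul_smul_comm]
    congr 1
    ring
  have hA12 : Commute A₁ A₂ := by
    rw [hA₁, hA₂]
    refine Commute.sum_left _ _ _ fun k _ => ?_
    refine Commute.sum_right _ _ _ fun j _ => ?_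
    exact ((hPQ k j).smul_left _).smul_right _
  -- nonnegativity in the Loewner order
  have h0A₁ : (0 : H →L[ℂ] H) ≤ A₁ := (nonneg_iff_isPositive A₁).mpr hA₁pos
  have h0A₂ : (0 : H →L[ℂ] H) ≤ A₂ := (nonneg_iff_isPositive A₂).mpr hA₂pos
  have h0D₁ : (0 : H →L[ℂ] H) ≤ D₁ := (nonneg_iff_isPositive D₁).mpr hD₁pos
  have h0D₂ : (0 : H →L[ℂ] H) ≤ D₂ := (nonneg_iff_isPositive D₂).mpr hD₂pos
  have hsaD₁ : IsSelfAdjoint D₁ := .of_nonneg h0D₁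
  have hsaD₂ : IsSelfAdjoint D₂ := .of_nonneg h0D₂
  have hsaA₁ : IsSelfAdjoint A₁ := .of_nonneg h0A₁
  have hD₂sqrt : CFC.sqrt A₂ = D₂ := CFC.sqrt_unique hD₂ h0D₂
  have hA₁D₂ : Commute A₁ D₂ := hD₂sqrt ▸ aux_commute_sqrt h0A₂ hsaA₁ hA12
  have hD₁sqrt : CFC.sqrt A₁ = D₁ := CFC.sqrt_unique hD₁ h0D₁
  have hcd : Commute D₁ D₂ :=
    (hD₁sqrt ▸ aux_commute_sqrt h0A₁ hsaD₂ hA₁D₂.symm).symm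
  -- (D₁ D₂)² = A₁ A₂
  have hsq : (D₁ * D₂) * (D₁ * D₂) = A₁ * A₂ := by
    rw [hcd.symm.mul_mul_mul_comm, hD₁, hD₂]
  -- D₁ D₂ is positive
  have hE : CFC.sqrt D₂ * CFC.sqrt D₂ = D₂ := CFC.sqrt_mul_sqrt_self D₂ h0D₂
  have h0E : (0 : H →L[ℂ] H) ≤ CFC.sqrt D₂ := CFC.sqrt_nonneg _
  have hEpos : (CFC.sqrt D₂).IsPositive := (nonneg_iff_isPositive _).mp h0E
  have hD₁E : Commute D₁ (CFC.sqrt D₂) := aux_commute_sqrt h0D₂ hsaD₁ hcd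
  have hDDpos : (D₁ * D₂).IsPositive := by
    have : D₁ * D₂ = CFC.sqrt D₂ * D₁ * CFC.sqrt D₂ := by
      nth_rewrite 1 [← hE]
      rw [← mul_assoc, hD₁E.eq]
    rw [this]
    have := hD₁pos.conj_adjoint (CFC.sqrt D₂)
    rwa [hEpos.isSelfAdjoint.adjoint_eq] at this
  have hAApos : (A₁ * A₂).IsPositive := by
    rw [← hsq]
    have h0DD : (0 : H →L[ℂ] H) ≤ D₁ * D₂ := (nonneg_iff_isPositive _).mpr hDDpos
    have hsaDD : IsSelfAdjoint (D₁ * D₂) := .of_nonneg h0DD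
    rw [← nonneg_iff_isPositive]
    calc (0 : H →L[ℂ] H) ≤ star (D₁ * D₂) * (D₁ * D₂) := star_mul_self_nonneg _
    _ = (D₁ * D₂) * (D₁ * D₂) := by rw [hsaDD.star_eq]
  exact ⟨goal1, hA12.eq, hAApos, hDDpos, hsq⟩
end

section
/- Let S be the unilateral weighted shift on ℓ²(ℕ) with S e_k = √((k+1)/(k+m)) e_{k+1} for a fixed integer m ≥ 1 (this is the multiplication operator M_z on the weighted Bergman space A²_m). Then ∑_{j=0}^{m} (−1)^j (m choose j) S^j S*^j equals the rank-one orthogonal projection onto the span of e₀. -/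
open ContinuousLinearMap Finset

open fwdDiff

lemma aux_key (m k : ℕ) (hm : 1 ≤ m) (hk : 1 ≤ k) :
    ∑ j ∈ range (m + 1), (-1 : ℤ) ^ j * (m.choose j) * ((k + m - 1 - j).choose (m - 1)) = 0 := by
  have hiter : (fwdDiff (1:ℕ))^[m] (fun x : ℕ => (x.choose (m - 1) : ℤ)) = fun _ => 0 := by
    obtain ⟨m', rfl⟩ : ∃ m', m = m' + 1 := ⟨m - 1, by omega⟩
    rw [Function.iterate_succ_apply']
    have := fwdDiff_iter_choose 0 m'
    simp only [add_zero] at this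
    rw [Nat.add_sub_cancel, this]
    simp [fwdDiff_const]
  have h0 := fwdDiff_iter_eq_sum_shift (h := (1:ℕ)) (fun x : ℕ => (x.choose (m-1) : ℤ)) m (k-1)
  rw [hiter] at h0
  simp only [smul_eq_mul, mul_one] at h0
  rw [← sum_range_reflect]
  simp only [Nat.add_sub_cancel]
  rw [show (0:ℤ) = ∑ i ∈ range (m+1), ((-1:ℤ)^(m-i) * m.choose i) * ((k-1+i).choose (m-1) : ℤ)
    from h0]
  refine sum_congr rfl fun i hi => ?_
  simp only [mem_range] at hi
  have h1 : m.choose (m - i) = m.choose i := Nat.choose_symm (by omega)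
  have h2 : k + m - 1 - (m - i) = k - 1 + i := by omega
  rw [h1, h2]

lemma aux_prod (t j : ℕ) :
    ∏ i ∈ range j, ((t + i + 1 : ℕ) : ℝ) = (t + j).factorial / t.factorial := by
  induction j with
  | zero => rw [add_zero]; simp [div_self (Nat.cast_ne_zero.2 (Nat.factorial_pos t).ne' : (t.factorial:ℝ) ≠ 0)]
  | succ j ih =>
      have hfac : (t + (j + 1)).factorial = (t + j + 1) * (t + j).factorial := by
        rw [show t + (j + 1) = (t + j) + 1 by ring, Nat.factorial_succ]
      have ht : (t.factorial : ℝ) ≠ 0 := Nat.cast_ne_zero.2 (Nat.factorial_pos t).ne'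
      rw [prod_range_succ, ih, hfac]
      push_cast
      field_simp

lemma aux_gamma (m k : ℕ) (hm : 1 ≤ m) (hk : 1 ≤ k) :
    ∑ j ∈ range (m + 1), (-1 : ℝ) ^ j * (m.choose j) *
      (if j ≤ k then ∏ i ∈ range j,
        (((k - j + i : ℕ) : ℝ) + 1) / (((k - j + i : ℕ) : ℝ) + m) else 0) = 0 := by
  have hterm : ∀ j ∈ range (m + 1),
      (-1 : ℝ) ^ j * (m.choose j) *
        (if j ≤ k then ∏ i ∈ range j,
          (((k - j + i : ℕ) : ℝ) + 1) / (((k - j + i : ℕ) : ℝ) + m) else 0) =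
      ((m - 1).factorial * k.factorial / (k + m - 1).factorial : ℝ) *
        (((-1 : ℤ) ^ j * (m.choose j) * ((k + m - 1 - j).choose (m - 1)) : ℤ) : ℝ) := by
    intro j hj
    simp only [mem_range] at hj
    by_cases hjk : j ≤ k
    · rw [if_pos hjk]
      have e0 : ∀ i ∈ range j,
          (((k - j + i : ℕ) : ℝ) + 1) / (((k - j + i : ℕ) : ℝ) + m)
          = (((k - j) + i + 1 : ℕ) : ℝ) / (((k + m - 1 - j) + i + 1 : ℕ) : ℝ) := by
        intro i _
        have h : ((k + m - 1 - j) + i + 1 : ℕ) = (k - j + i) + m := by omega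
        rw [h]
        push_cast
        ring_nf
      rw [prod_congr rfl e0, prod_div_distrib, aux_prod, aux_prod]
      have h1 : k - j + j = k := by omega
      have h2 : k + m - 1 - j + j = k + m - 1 := by omega
      rw [h1, h2]
      have hC : ((k + m - 1 - j).choose (m - 1) * (m - 1).factorial * (k - j).factorial : ℕ)
          = (k + m - 1 - j).factorial := by
        have := Nat.choose_mul_factorial_mul_factorial
          (show m - 1 ≤ k + m - 1 - j by omega) (n := k + m - 1 - j)
        rwa [show k + m - 1 - j - (m - 1) = k - j by omega] at this
      have hC' : (((k + m - 1 - j).choose (m - 1) : ℝ) * (m - 1).factorial * (k - j).factorial)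
          = ((k + m - 1 - j).factorial : ℝ) := by exact_mod_cast congrArg (Nat.cast (R := ℝ)) hC
      have p1 : ((k - j).factorial : ℝ) ≠ 0 := Nat.cast_ne_zero.2 (Nat.factorial_pos _).ne'
      have p2 : ((k + m - 1).factorial : ℝ) ≠ 0 := Nat.cast_ne_zero.2 (Nat.factorial_pos _).ne'
      have p3 : ((k + m - 1 - j).factorial : ℝ) ≠ 0 := Nat.cast_ne_zero.2 (Nat.factorial_pos _).ne'
      have p4 : ((m - 1).factorial : ℝ) ≠ 0 := Nat.cast_ne_zero.2 (Nat.factorial_pos _).ne'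
      push_cast
      field_simp
      linear_combination (-(m.choose j : ℝ)) * hC'
    · rw [if_neg hjk]
      have : (k + m - 1 - j).choose (m - 1) = 0 :=
        Nat.choose_eq_zero_of_lt (by omega)
      rw [this]
      push_cast
      ring
  rw [sum_congr rfl hterm, ← mul_sum]
  rw [show ∑ j ∈ range (m+1), (((-1 : ℤ) ^ j * (m.choose j) * ((k + m - 1 - j).choose (m - 1)) : ℤ) : ℝ)
      = ((∑ j ∈ range (m+1), ((-1 : ℤ) ^ j * (m.choose j) * ((k + m - 1 - j).choose (m - 1))) : ℤ) : ℝ) by push_cast; ring]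
  rw [aux_key m k hm hk]
  simp

set_option maxHeartbeats 1000000 in
/-- Let `S` be the weighted shift on `ℓ²(ℕ)` with `S e_k = √((k+1)/(k+m)) e_{k+1}`
(the Bergman shift `M_z` on `A²_m`), `m ≥ 1`. Then
`∑_{j=0}^m (−1)^j (m choose j) S^j S*^j` is the rank-one orthogonal projection onto
the span of `e₀`, i.e. it maps `x` to `⟨e₀, x⟩ e₀`. -/
theorem statement13 (m : ℕ) (hm : 1 ≤ m)
    (S : lp (fun _ : ℕ => ℂ) 2 →L[ℂ] lp (fun _ : ℕ => ℂ) 2)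
    (hS : ∀ k : ℕ, S (lp.single 2 k (1 : ℂ)) =
      ((Real.sqrt ((k + 1) / (k + m)) : ℝ) : ℂ) • lp.single 2 (k + 1) (1 : ℂ)) :
    ∀ x : lp (fun _ : ℕ => ℂ) 2,
      (∑ j ∈ range (m + 1),
          ((-1 : ℂ) ^ j * (m.choose j : ℂ)) • (S ^ j * (adjoint S) ^ j)) x =
        (inner ℂ (lp.single 2 0 (1 : ℂ)) x : ℂ) • lp.single 2 0 (1 : ℂ) := by
  classical
  set e : ℕ → lp (fun _ : ℕ => ℂ) 2 := fun k => lp.single 2 k 1 with he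
  set w : ℕ → ℝ := fun n => Real.sqrt (((n : ℝ) + 1) / ((n : ℝ) + (m : ℝ))) with hw
  have hSe : ∀ k, S (e k) = ((w k : ℝ) : ℂ) • e (k + 1) := fun k => hS k
  have hcoe : ∀ (y : lp (fun _ : ℕ => ℂ) 2) (j : ℕ), (inner ℂ (e j) y : ℂ) = y j := by
    intro y j
    rw [he, lp.inner_single_left]
    simp
  have hecoe : ∀ n j : ℕ, ((e n : lp (fun _ : ℕ => ℂ) 2) : ∀ _ : ℕ, ℂ) j
      = if j = n then 1 else 0 := by
    intro n j
    simp only [he]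
    by_cases h : j = n
    · subst h
      rw [if_pos rfl]
      exact lp.single_apply_self (E := fun _ : ℕ => ℂ) 2 j (1 : ℂ)
    · rw [if_neg h]
      exact lp.single_apply_ne (E := fun _ : ℕ => ℂ) 2 n (1 : ℂ) h
  set A := adjoint S with hA
  -- action of the adjoint on basis vectors
  have hA0 : A (e 0) = 0 := by
    apply lp.ext
    funext j
    have h1 : (inner ℂ (e j) (A (e 0)) : ℂ) = inner ℂ (S (e j)) (e 0) := adjoint_inner_right S _ _
    rw [hcoe] at h1
    rw [hSe, inner_smul_left, hcoe] at h1
    rw [lp.coeFn_zero, Pi.zero_apply, h1, hecoe 0 (j + 1)]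
    simp
  have hA1 : ∀ n, A (e (n + 1)) = ((w n : ℝ) : ℂ) • e n := by
    intro n
    apply lp.ext
    funext j
    have h1 : (inner ℂ (e j) (A (e (n+1))) : ℂ) = inner ℂ (S (e j)) (e (n+1)) := adjoint_inner_right S _ _
    rw [hcoe] at h1
    rw [hSe, inner_smul_left, hcoe] at h1
    rw [h1, lp.coeFn_smul, Pi.smul_apply]
    rw [hecoe (n + 1) (j + 1), hecoe n j]
    by_cases hj : j = n
    · subst hj
      simp [Complex.conj_ofReal]
    · rw [if_neg (by omega : j + 1 ≠ n + 1), if_neg hj]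
      simp
  -- powers
  have hApow : ∀ j t, (A ^ j) (e (t + j)) = ((∏ i ∈ range j, w (t + i) : ℝ) : ℂ) • e t := by
    intro j
    induction j with
    | zero => intro t; simp
    | succ j ih =>
        intro t
        rw [pow_succ, ContinuousLinearMap.mul_apply, show t + (j + 1) = (t + j) + 1 from rfl,
          hA1 (t + j), map_smul, ih, smul_smul, prod_range_succ]
        push_cast
        rw [mul_comm]
  have hApowz : ∀ j k, k < j → (A ^ j) (e k) = 0 := by
    intro j
    induction j with
    | zero => intro k hk; omega
    | succ j ih =>
        intro k hk
        rw [pow_succ, ContinuousLinearMap.mul_apply]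
        cases k with
        | zero => rw [hA0, map_zero]
        | succ t => rw [hA1 t, map_smul, ih t (by omega), smul_zero]
  have hSpow : ∀ j t, (S ^ j) (e t) = ((∏ i ∈ range j, w (t + i) : ℝ) : ℂ) • e (t + j) := by
    intro j
    induction j with
    | zero => intro t; simp
    | succ j ih =>
        intro t
        rw [pow_succ', ContinuousLinearMap.mul_apply, ih t, map_smul, hSe (t + j), smul_smul,
          prod_range_succ, show t + (j + 1) = (t + j) + 1 from rfl]
        push_cast
        ring_nf
  -- the j-th term applied to a basis vector
  have hterm : ∀ j k : ℕ, (S ^ j * A ^ j) (e k) =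
      (((if j ≤ k then ∏ i ∈ range j,
          (((k - j + i : ℕ) : ℝ) + 1) / (((k - j + i : ℕ) : ℝ) + m) else 0 : ℝ)) : ℂ) • e k := by
    intro j k
    rw [ContinuousLinearMap.mul_apply]
    by_cases hjk : j ≤ k
    · obtain ⟨t, rfl⟩ : ∃ t, k = t + j := ⟨k - j, by omega⟩
      rw [if_pos hjk, hApow, map_smul, hSpow, smul_smul, show t + j - j = t from by omega]
      congr 1
      have hsq : ∀ i ∈ range j, w (t + i) * w (t + i)
          = (((t + i : ℕ) : ℝ) + 1) / (((t + i : ℕ) : ℝ) + m) := by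
        intro i _
        rw [hw]
        exact Real.mul_self_sqrt (by positivity)
      rw [← Complex.ofReal_mul, ← prod_mul_distrib, prod_congr rfl hsq]
    · rw [if_neg hjk, hApowz j k (by omega), map_zero]
      simp
  -- the full operator applied to a basis vector
  have hTk : ∀ k : ℕ, (∑ j ∈ range (m + 1),
      ((-1 : ℂ) ^ j * (m.choose j : ℂ)) • (S ^ j * A ^ j)) (e k)
      = (if k = 0 then 1 else 0 : ℂ) • e k := by
    intro k
    rw [ContinuousLinearMap.sum_apply]
    simp only [ContinuousLinearMap.smul_apply, hterm, smul_smul]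
    rw [← sum_smul]
    congr 1
    rcases Nat.eq_zero_or_pos k with hk | hk
    · subst hk
      rw [if_pos rfl, Finset.sum_eq_single 0]
      · simp
      · intro j hj hj0
        rw [if_neg (by omega), Complex.ofReal_zero, mul_zero]
      · intro h; simp at h
    · rw [if_neg (by omega)]
      have := aux_gamma m k hm hk
      calc ∑ j ∈ range (m + 1), (-1 : ℂ) ^ j * (m.choose j : ℂ) *
            (((if j ≤ k then ∏ i ∈ range j,
              (((k - j + i : ℕ) : ℝ) + 1) / (((k - j + i : ℕ) : ℝ) + m) else 0 : ℝ)) : ℂ)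
          = ((∑ j ∈ range (m + 1), (-1 : ℝ) ^ j * (m.choose j) *
            (if j ≤ k then ∏ i ∈ range j,
              (((k - j + i : ℕ) : ℝ) + 1) / (((k - j + i : ℕ) : ℝ) + m) else 0) : ℝ) : ℂ) := by
            push_cast
            rfl
        _ = 0 := by rw [this]; simp
  -- conclude for general x
  intro x
  have hx : HasSum (fun k => lp.single 2 k (x k)) x := lp.hasSum_single ENNReal.ofNat_ne_top x
  set T := ∑ j ∈ range (m + 1), ((-1 : ℂ) ^ j * (m.choose j : ℂ)) • (S ^ j * A ^ j) with hT
  have hTx : HasSum (fun k => T (lp.single 2 k (x k))) (T x) := hx.mapL T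
  have hfun : (fun k => T (lp.single 2 k (x k)))
      = fun k => if k = 0 then (x 0 : ℂ) • e 0 else 0 := by
    funext k
    have hsingle : lp.single 2 k (x k) = (x k : ℂ) • e k := by
      rw [he, ← lp.single_smul, smul_eq_mul, mul_one]
    rw [hsingle, map_smul, hTk k]
    by_cases hk : k = 0
    · subst hk; simp
    · rw [if_neg hk, if_neg hk, zero_smul, smul_zero]
  rw [hfun] at hTx
  have h2 : HasSum (fun k : ℕ => if k = 0 then (x 0 : ℂ) • e 0 else 0) ((x 0 : ℂ) • e 0) :=
    hasSum_ite_eq 0 _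
  have : T x = (x 0 : ℂ) • e 0 := hTx.unique h2
  rw [hT] at this
  rw [this, hcoe x 0]
end

section
/- Let T be a bounded operator on a complex Hilbert space H with T*^l → 0 strongly and with positive defect operator A = ∑_{k=0}^m (−1)^k (m choose k) T^k T*^k, and let D = A^{1/2}. Then the map v : H → ℓ²(ℕ; H) defined by (v h)_k = √(binom(m+k−1,k)) · D T*^k h is a well-defined isometry satisfying v T* = W* v, where W is the operator on ℓ²(ℕ; H) given by (W* x)_k = √((k+1)/(k+m)) x_{k+1} (the H-valued adjoint weighted Bergman shift of weight m). -/
open ContinuousLinearMap Filter Finset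

section AuxAgler

variable {H : Type*} [NormedAddCommGroup H] [InnerProductSpace ℂ H] [CompleteSpace H]

local notation "⟪" x ", " y "⟫" => @inner ℂ _ _ x y

noncomputable def rrA (T : H →L[ℂ] H) (k : ℕ) (h : H) : ℝ :=
  RCLike.re ⟪(T ^ k) (((adjoint T) ^ k) h), h⟫

noncomputable def qqA (T : H →L[ℂ] H) (s : ℕ) (h : H) : ℝ :=
  ∑ k ∈ range (s + 1), ((-1 : ℝ) ^ k * (s.choose k : ℝ)) * rrA T k h

lemma rrA_cont (T : H →L[ℂ] H) (k : ℕ) : Continuous (rrA T k) := by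
  apply RCLike.continuous_re.comp
  exact Continuous.inner ((T ^ k).continuous.comp ((adjoint T ^ k).continuous)) continuous_id

lemma qqA_cont (T : H →L[ℂ] H) (s : ℕ) : Continuous (qqA T s) := by
  apply continuous_finset_sum
  exact fun k _ => continuous_const.mul (rrA_cont T k)

lemma rrA_zero (T : H →L[ℂ] H) (k : ℕ) : rrA T k 0 = 0 := by
  simp [rrA]

lemma qqA_zero_pt (T : H →L[ℂ] H) (s : ℕ) : qqA T s 0 = 0 := by
  simp [qqA, rrA_zero]

lemma qqA_zero (T : H →L[ℂ] H) (h : H) : qqA T 0 h = ‖h‖ ^ 2 := by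
  simp only [qqA]
  rw [Finset.sum_range_one]
  simp only [pow_zero, Nat.choose_self, Nat.cast_one, one_mul, rrA,
    ContinuousLinearMap.one_apply]
  exact inner_self_eq_norm_sq (𝕜 := ℂ) h

lemma rrA_shift (T : H →L[ℂ] H) (k : ℕ) (h : H) :
    rrA T k (adjoint T h) = rrA T (k + 1) h := by
  unfold rrA
  have h1 : ((adjoint T) ^ k) (adjoint T h) = ((adjoint T) ^ (k + 1)) h := by
    rw [pow_succ]; rfl
  rw [h1, adjoint_inner_right, ← ContinuousLinearMap.comp_apply, ← ContinuousLinearMap.mul_def, ← pow_succ']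

lemma algA (f : ℕ → ℝ) (s : ℕ) :
    ∑ k ∈ range (s + 2), ((-1 : ℝ) ^ k * ((s+1).choose k : ℝ)) * f k
      = ∑ k ∈ range (s + 1), ((-1 : ℝ) ^ k * (s.choose k : ℝ)) * f k
        - ∑ k ∈ range (s + 1), ((-1 : ℝ) ^ k * (s.choose k : ℝ)) * f (k + 1) := by
  have key : (∑ k ∈ range (s + 1), ((-1 : ℝ) ^ k * (s.choose k : ℝ)) * f k)
      + ∑ k ∈ range (s + 1), ((-1 : ℝ) ^ k * (s.choose (k+1) : ℝ)) * f (k+1) = f 0 := by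
    rw [Finset.sum_range_succ' (fun k => ((-1 : ℝ) ^ k * (s.choose k : ℝ)) * f k) s,
        Finset.sum_range_succ (fun k => ((-1 : ℝ) ^ k * (s.choose (k+1) : ℝ)) * f (k+1)) s]
    simp only [Nat.choose_succ_self, Nat.cast_zero, mul_zero, zero_mul, add_zero, pow_zero,
      Nat.choose_zero_right, Nat.cast_one, one_mul]
    have e0 : ∀ k, ((-1 : ℝ) ^ (k+1) * (s.choose (k+1) : ℝ)) * f (k+1)
        = -(((-1 : ℝ) ^ k * (s.choose (k+1) : ℝ)) * f (k+1)) := by intro k; ring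
    rw [Finset.sum_congr rfl (fun k _ => e0 k), Finset.sum_neg_distrib]
    ring
  have e1 : ∑ k ∈ range (s + 2), ((-1 : ℝ) ^ k * ((s+1).choose k : ℝ)) * f k
      = (∑ k ∈ range (s + 1), ((-1 : ℝ) ^ (k+1) * ((s+1).choose (k+1) : ℝ)) * f (k+1)) + f 0 := by
    rw [Finset.sum_range_succ' (fun k => ((-1 : ℝ) ^ k * ((s+1).choose k : ℝ)) * f k) (s+1)]
    simp
  have e2 : ∀ k, ((-1 : ℝ) ^ (k+1) * ((s+1).choose (k+1) : ℝ)) * f (k+1)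
      = -(((-1 : ℝ) ^ k * (s.choose k : ℝ)) * f (k+1))
        + (-(((-1 : ℝ) ^ k * (s.choose (k+1) : ℝ)) * f (k+1))) := by
    intro k
    rw [Nat.choose_succ_succ]
    push_cast
    ring
  rw [e1, Finset.sum_congr rfl (fun k _ => e2 k), Finset.sum_add_distrib,
    Finset.sum_neg_distrib, Finset.sum_neg_distrib]
  linarith [key]

end AuxAgler

section More

variable {H : Type*} [NormedAddCommGroup H] [InnerProductSpace ℂ H] [CompleteSpace H]

local notation "⟪" x ", " y "⟫" => @inner ℂ _ _ x y

lemma qqA_succ (T : H →L[ℂ] H) (s : ℕ) (h : H) :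
    qqA T (s + 1) h = qqA T s h - qqA T s (adjoint T h) := by
  have h1 : qqA T s (adjoint T h)
      = ∑ k ∈ range (s + 1), ((-1 : ℝ) ^ k * (s.choose k : ℝ)) * rrA T (k + 1) h := by
    unfold qqA
    exact Finset.sum_congr rfl (fun k _ => by rw [rrA_shift])
  rw [h1]
  exact algA (fun k => rrA T k h) s

lemma qqA_telescope (T : H →L[ℂ] H) (s : ℕ) (h : H) (N : ℕ) :
    qqA T s h = (∑ k ∈ range N, qqA T (s + 1) (((adjoint T) ^ k) h))
      + qqA T s (((adjoint T) ^ N) h) := by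
  induction N with
  | zero => simp
  | succ n ih =>
      have h2 : adjoint T (((adjoint T) ^ n) h) = ((adjoint T) ^ (n + 1)) h := by
        rw [pow_succ', ContinuousLinearMap.mul_apply]
      have h3 := qqA_succ T s (((adjoint T) ^ n) h)
      rw [h2] at h3
      rw [Finset.sum_range_succ]
      linarith

lemma qqA_tail (T : H →L[ℂ] H) (s : ℕ) (h : H)
    (hC0 : Tendsto (fun l : ℕ => ((adjoint T) ^ l) h) atTop (nhds 0)) :
    Tendsto (fun N : ℕ => qqA T s (((adjoint T) ^ N) h)) atTop (nhds 0) := by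
  have h1 := ((qqA_cont T s).tendsto 0).comp hC0
  simpa [qqA_zero_pt, Function.comp_def] using h1

lemma qqA_hasSum (T : H →L[ℂ] H) (s : ℕ) (h : H)
    (hC0 : Tendsto (fun l : ℕ => ((adjoint T) ^ l) h) atTop (nhds 0))
    (hpos : ∀ x : H, 0 ≤ qqA T (s + 1) x) :
    HasSum (fun k => qqA T (s + 1) (((adjoint T) ^ k) h)) (qqA T s h) := by
  rw [hasSum_iff_tendsto_nat_of_nonneg (fun k => hpos _)]
  have h1 : (fun N => ∑ k ∈ range N, qqA T (s + 1) (((adjoint T) ^ k) h))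
      = fun N => qqA T s h - qqA T s (((adjoint T) ^ N) h) := by
    funext N; have := qqA_telescope T s h N; linarith
  rw [h1]
  have h2 := (qqA_tail T s h hC0).const_sub (qqA T s h)
  simpa using h2

lemma qqA_pos (T : H →L[ℂ] H) (m : ℕ)
    (hC0 : ∀ h : H, Tendsto (fun l : ℕ => ((adjoint T) ^ l) h) atTop (nhds 0))
    (hmpos : ∀ x : H, 0 ≤ qqA T m x) :
    ∀ s ≤ m, ∀ x : H, 0 ≤ qqA T s x := by
  have key : ∀ j s, s + j = m → ∀ x : H, 0 ≤ qqA T s x := by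
    intro j
    induction j with
    | zero => intro s hs x; rw [Nat.add_zero] at hs; subst hs; exact hmpos x
    | succ n ih =>
        intro s hs x
        have hpos1 : ∀ y : H, 0 ≤ qqA T (s + 1) y := by
          intro y; exact ih (s + 1) (by omega) y
        have h1 : Tendsto (fun N : ℕ => qqA T s x - qqA T s (((adjoint T) ^ N) x))
            atTop (nhds (qqA T s x)) := by
          have h2 := (qqA_tail T s x (hC0 x)).const_sub (qqA T s x)
          simpa using h2
        refine ge_of_tendsto' h1 (fun N => ?_)
        have h3 := qqA_telescope T s x N
        have h4 : 0 ≤ ∑ k ∈ range N, qqA T (s + 1) (((adjoint T) ^ k) x) :=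
          Finset.sum_nonneg (fun k _ => hpos1 _)
        linarith
  intro s hs x
  exact key (m - s) s (by omega) x

lemma hockeyA (s : ℕ) (n : ℕ) :
    ∑ k ∈ range (n + 1), (s + k - 1).choose k = (s + n).choose n := by
  induction n with
  | zero => simp
  | succ n ih =>
      rw [Finset.sum_range_succ, ih]
      have h1 : s + (n + 1) - 1 = s + n := by omega
      rw [h1]
      have h2 : s + (n + 1) = (s + n) + 1 := by omega
      rw [h2, Nat.choose_succ_succ]

end More

lemma rearrange (g : ℕ → ℝ) (c : ℕ → ℕ) (L : ℝ) (r : ℕ → ℝ)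
    (hg : ∀ n, 0 ≤ g n) (hr : ∀ k, 0 ≤ r k)
    (hrow : ∀ k, HasSum (fun j => g (k + j)) (r k))
    (hcol : HasSum (fun k => (c k : ℝ) * r k) L) :
    HasSum (fun n => ((∑ k ∈ range (n + 1), c k : ℕ) : ℝ) * g n) L := by
  have hL : 0 ≤ L := hcol.nonneg (fun k => mul_nonneg (Nat.cast_nonneg _) (hr k))
  set G : ℕ → ENNReal := fun n => ENNReal.ofReal (g n) with hG
  have stepA : ∀ k, ENNReal.ofReal (r k) = ∑' j, G (k + j) := by
    intro k
    rw [← (hrow k).tsum_eq]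
    exact ENNReal.ofReal_tsum_of_nonneg (fun j => hg _) (hrow k).summable
  have stepB : ENNReal.ofReal L = ∑' k, ENNReal.ofReal ((c k : ℝ) * r k) := by
    rw [← hcol.tsum_eq]
    exact ENNReal.ofReal_tsum_of_nonneg (fun k => mul_nonneg (Nat.cast_nonneg _) (hr k))
      hcol.summable
  have stepC : ENNReal.ofReal L = ∑' k, ∑' j, (c k : ENNReal) * G (k + j) := by
    rw [stepB]
    refine tsum_congr fun k => ?_
    rw [ENNReal.ofReal_mul (Nat.cast_nonneg _), stepA k, ← ENNReal.tsum_mul_left]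
    congr 1
    simp [ENNReal.ofReal_natCast]
  have stepE : ENNReal.ofReal L = ∑' p : ℕ × ℕ, (c p.1 : ENNReal) * G (p.1 + p.2) := by
    rw [stepC]
    exact (ENNReal.tsum_prod' (f := fun p : ℕ × ℕ => (c p.1 : ENNReal) * G (p.1 + p.2))).symm
  have stepF : ENNReal.ofReal L
      = ∑' x : Σ n : ℕ, {p : ℕ × ℕ // p ∈ antidiagonal n},
          (c x.2.1.1 : ENNReal) * G (x.2.1.1 + x.2.1.2) := by
    rw [stepE, ← Finset.HasAntidiagonal.sigmaAntidiagonalEquivProd.tsum_eq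
      (fun p : ℕ × ℕ => (c p.1 : ENNReal) * G (p.1 + p.2))]
    rfl
  have stepG : ENNReal.ofReal L
      = ∑' n : ℕ, ((∑ k ∈ range (n + 1), c k : ℕ) : ENNReal) * G n := by
    rw [stepF, ENNReal.tsum_sigma']
    refine tsum_congr fun n => ?_
    rw [Finset.tsum_subtype (antidiagonal n)
      (fun p : ℕ × ℕ => (c p.1 : ENNReal) * G (p.1 + p.2))]
    rw [Finset.Nat.sum_antidiagonal_eq_sum_range_succ_mk
      (fun p : ℕ × ℕ => (c p.1 : ENNReal) * G (p.1 + p.2)) n]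
    have : ∀ k ∈ range (n + 1), (c k : ENNReal) * G (k + (n - k)) = (c k : ENNReal) * G n := by
      intro k hk
      rw [Finset.mem_range] at hk
      congr 2
      omega
    rw [Finset.sum_congr rfl this, ← Finset.sum_mul]
    norm_cast
  -- now convert back to real
  have hne0 : (∑' n : ℕ, ((∑ k ∈ range (n + 1), c k : ℕ) : ENNReal) * G n) ≠ ⊤ := by
    rw [← stepG]; exact ENNReal.ofReal_ne_top
  have hptw : ∀ n : ℕ, ((((∑ k ∈ range (n + 1), c k : ℕ) : ENNReal)) * G n).toReal
      = ((∑ k ∈ range (n + 1), c k : ℕ) : ℝ) * g n := by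
    intro n
    rw [ENNReal.toReal_mul, hG]
    simp only []
    rw [ENNReal.toReal_ofReal (hg n)]
    rw [ENNReal.toReal_natCast]
  have hsummable : Summable (fun n => ((∑ k ∈ range (n + 1), c k : ℕ) : ℝ) * g n) :=
    (ENNReal.summable_toReal hne0).congr hptw
  have htsum : (∑' n : ℕ, ((∑ k ∈ range (n + 1), c k : ℕ) : ℝ) * g n) = L := by
    have h3 : ENNReal.ofReal (∑' n : ℕ, ((∑ k ∈ range (n + 1), c k : ℕ) : ℝ) * g n)
        = ENNReal.ofReal L := by
      rw [ENNReal.ofReal_tsum_of_nonneg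
        (fun n => mul_nonneg (Nat.cast_nonneg _) (hg n)) hsummable, stepG]
      refine tsum_congr fun n => ?_
      rw [ENNReal.ofReal_mul (Nat.cast_nonneg _), ENNReal.ofReal_natCast]
    exact (ENNReal.ofReal_eq_ofReal_iff
      (tsum_nonneg (fun n => mul_nonneg (Nat.cast_nonneg _) (hg n))) hL).mp h3
  exact htsum ▸ hsummable.hasSum

section MainAux

variable {H : Type*} [NormedAddCommGroup H] [InnerProductSpace ℂ H] [CompleteSpace H]

local notation "⟪" x ", " y "⟫" => @inner ℂ _ _ x y

lemma qqA_main (T : H →L[ℂ] H) (m : ℕ) (hm : 1 ≤ m)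
    (hC0 : ∀ h : H, Tendsto (fun l : ℕ => ((adjoint T) ^ l) h) atTop (nhds 0))
    (hmpos : ∀ x : H, 0 ≤ qqA T m x) (h : H) :
    HasSum (fun k => (((m + k - 1).choose k : ℕ) : ℝ) * qqA T m (((adjoint T) ^ k) h))
      (‖h‖ ^ 2) := by
  have hpos := qqA_pos T m hC0 hmpos
  suffices hmain : ∀ s, 1 ≤ s → s ≤ m → ∀ h : H,
      HasSum (fun k => (((s + k - 1).choose k : ℕ) : ℝ) * qqA T s (((adjoint T) ^ k) h))
        (‖h‖ ^ 2) by
    exact hmain m hm le_rfl h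
  intro s hs1
  induction s, hs1 using Nat.le_induction with
  | base =>
      intro hsm h
      have h0 := qqA_hasSum T 0 h (hC0 h) (fun x => hpos 1 hsm x)
      rw [qqA_zero] at h0
      have heq : (fun k => (((1 + k - 1).choose k : ℕ) : ℝ) * qqA T 1 (((adjoint T) ^ k) h))
          = fun k => qqA T (0 + 1) (((adjoint T) ^ k) h) := by
        funext k
        have h1 : 1 + k - 1 = k := by omega
        rw [h1, Nat.choose_self, zero_add]
        simp
      rw [heq]
      exact h0
  | succ s hs ih =>
      intro hsm h
      have hsm' : s ≤ m := by omega
      have ihs := ih hsm' h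
      have hrow : ∀ k, HasSum (fun j => qqA T (s + 1) (((adjoint T) ^ (k + j)) h))
          (qqA T s (((adjoint T) ^ k) h)) := by
        intro k
        have h1 := qqA_hasSum T s (((adjoint T) ^ k) h) (hC0 _) (fun x => hpos (s + 1) hsm x)
        have heq : (fun j => qqA T (s + 1) (((adjoint T) ^ j) (((adjoint T) ^ k) h)))
            = fun j => qqA T (s + 1) (((adjoint T) ^ (k + j)) h) := by
          funext j
          rw [add_comm k j, pow_add, ContinuousLinearMap.mul_apply]
        rw [heq] at h1
        exact h1
      have hre := rearrange (fun n => qqA T (s + 1) (((adjoint T) ^ n) h))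
        (fun k => (s + k - 1).choose k) (‖h‖ ^ 2)
        (fun k => qqA T s (((adjoint T) ^ k) h))
        (fun n => hpos (s + 1) hsm _) (fun k => hpos s hsm' _) hrow ihs
      have heq2 : (fun n => ((∑ k ∈ range (n + 1), (s + k - 1).choose k : ℕ) : ℝ)
            * qqA T (s + 1) (((adjoint T) ^ n) h))
          = fun n => (((s + 1 + n - 1).choose n : ℕ) : ℝ)
            * qqA T (s + 1) (((adjoint T) ^ n) h) := by
        funext n
        rw [hockeyA s n]
        have h3 : s + 1 + n - 1 = s + n := by omega
        rw [h3]
      rw [heq2] at hre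
      exact hre

lemma qqA_eq_re (T A : H →L[ℂ] H) (m : ℕ)
    (hA : A = ∑ k ∈ range (m + 1),
      ((-1 : ℂ) ^ k * (m.choose k : ℂ)) • (T ^ k * (adjoint T) ^ k)) (x : H) :
    qqA T m x = RCLike.re ⟪A x, x⟫ := by
  rw [hA, ContinuousLinearMap.sum_apply, sum_inner, map_sum]
  refine Finset.sum_congr rfl fun k _ => ?_
  rw [ContinuousLinearMap.smul_apply, inner_smul_left, ContinuousLinearMap.mul_apply]
  have hc : (starRingEnd ℂ) ((-1 : ℂ) ^ k * (m.choose k : ℂ))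
      = ((((-1 : ℝ) ^ k * (m.choose k : ℝ)) : ℝ) : ℂ) := by
    push_cast
    rw [map_mul, map_pow]
    simp
  rw [hc]
  simp only [RCLike.re_to_complex, Complex.re_ofReal_mul, rrA]

end MainAux


/-- Let `T` be of class `C_{·0}` with positive defect operator
`A = ∑_{k=0}^m (−1)^k (m choose k) T^k T*^k` and `D = A^{1/2}`. Then the map
`v : H → ℓ²(ℕ; H)`, `(v h)_k = √(binom(m+k−1,k)) D T*^k h`, is a well-defined
isometry satisfying `v T* = W* v`, where `W*` is the adjoint weighted Bergman shift
`(W* x)_k = √((k+1)/(k+m)) x_{k+1}` on `ℓ²(ℕ; H)`. -/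
theorem statement19 {H : Type*} [NormedAddCommGroup H] [InnerProductSpace ℂ H]
    [CompleteSpace H] (T : H →L[ℂ] H) (m : ℕ) (hm : 1 ≤ m)
    (hC0 : ∀ h : H, Tendsto (fun l : ℕ => ((adjoint T) ^ l) h) atTop (nhds 0))
    (A : H →L[ℂ] H)
    (hA : A = ∑ k ∈ range (m + 1),
      ((-1 : ℂ) ^ k * (m.choose k : ℂ)) • (T ^ k * (adjoint T) ^ k))
    (hApos : A.IsPositive)
    (D : H →L[ℂ] H) (hDpos : D.IsPositive) (hD : D * D = A)
    (W : lp (fun _ : ℕ => H) 2 →L[ℂ] lp (fun _ : ℕ => H) 2)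
    (hW : ∀ (x : lp (fun _ : ℕ => H) 2) (k : ℕ),
      (adjoint W) x k = ((Real.sqrt ((k + 1) / (k + m)) : ℝ) : ℂ) • x (k + 1)) :
    ∃ v : H →L[ℂ] lp (fun _ : ℕ => H) 2,
      (∀ (h : H) (k : ℕ),
        v h k = ((Real.sqrt ((m + k - 1).choose k) : ℝ) : ℂ) • D (((adjoint T) ^ k) h)) ∧
      (∀ h : H, ‖v h‖ = ‖h‖) ∧
      v ∘L adjoint T = adjoint W ∘L v := by
  classical
  have hmpos : ∀ x : H, 0 ≤ qqA T m x := by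
    intro x
    rw [qqA_eq_re T A m hA x]
    exact hApos.re_inner_nonneg_left x
  have hDx : ∀ x : H, qqA T m x = ‖D x‖ ^ 2 := by
    intro x
    rw [qqA_eq_re T A m hA x, ← hD, ContinuousLinearMap.mul_apply]
    nth_rewrite 1 [← hDpos.isSelfAdjoint.adjoint_eq]
    rw [ContinuousLinearMap.adjoint_inner_left]
    exact inner_self_eq_norm_sq (𝕜 := ℂ) (D x)
  have hsum : ∀ h : H, HasSum
      (fun k => ‖((Real.sqrt ((m + k - 1).choose k) : ℝ) : ℂ) • D (((adjoint T) ^ k) h)‖ ^ 2)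
      (‖h‖ ^ 2) := by
    intro h
    have h1 := qqA_main T m hm hC0 hmpos h
    have heq : (fun k =>
          ‖((Real.sqrt ((m + k - 1).choose k) : ℝ) : ℂ) • D (((adjoint T) ^ k) h)‖ ^ 2)
        = fun k => (((m + k - 1).choose k : ℕ) : ℝ) * qqA T m (((adjoint T) ^ k) h) := by
      funext k
      rw [norm_smul, hDx, Complex.norm_real, Real.norm_eq_abs,
        abs_of_nonneg (Real.sqrt_nonneg _), mul_pow, Real.sq_sqrt (Nat.cast_nonneg _)]
    rw [heq]
    exact h1
  have hmem : ∀ h : H, Memℓp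
      (fun k => ((Real.sqrt ((m + k - 1).choose k) : ℝ) : ℂ) • D (((adjoint T) ^ k) h))
      (2 : ENNReal) := by
    intro h
    apply memℓp_gen
    have h2 : ((2 : ENNReal)).toReal = (2 : ℝ) := by norm_num
    rw [h2]
    have heq : (fun k =>
          ‖((Real.sqrt ((m + k - 1).choose k) : ℝ) : ℂ) • D (((adjoint T) ^ k) h)‖ ^ (2 : ℝ))
        = fun k =>
          ‖((Real.sqrt ((m + k - 1).choose k) : ℝ) : ℂ) • D (((adjoint T) ^ k) h)‖ ^ 2 := by
      funext k
      rw [Real.rpow_two]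
    rw [heq]
    exact (hsum h).summable
  let Vfun : H → lp (fun _ : ℕ => H) 2 := fun h => ⟨_, hmem h⟩
  have hVapp : ∀ (h : H) (k : ℕ), (Vfun h) k
      = ((Real.sqrt ((m + k - 1).choose k) : ℝ) : ℂ) • D (((adjoint T) ^ k) h) :=
    fun h k => rfl
  let Vlin : H →ₗ[ℂ] lp (fun _ : ℕ => H) 2 :=
    { toFun := Vfun
      map_add' := fun x y => by
        apply lp.ext
        funext k
        simp only [lp.coeFn_add, Pi.add_apply, hVapp, map_add, smul_add]
      map_smul' := fun c x => by
        apply lp.ext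
        funext k
        simp only [lp.coeFn_smul, Pi.smul_apply, hVapp, map_smul, RingHom.id_apply]
        rw [smul_comm] }
  have hVnorm : ∀ h : H, ‖Vlin h‖ = ‖h‖ := by
    intro h
    have h0 : (0 : ℝ) < (2 : ENNReal).toReal := by norm_num
    have h1 := lp.norm_rpow_eq_tsum h0 (Vlin h)
    have h2 : ((2 : ENNReal)).toReal = (2 : ℝ) := by norm_num
    rw [h2] at h1
    have h3 : ‖Vlin h‖ ^ (2 : ℕ) = ‖h‖ ^ (2 : ℕ) := by
      rw [← Real.rpow_two, h1]
      have h4 : (fun k => ‖(Vlin h) k‖ ^ (2 : ℝ)) = fun k => ‖(Vlin h) k‖ ^ (2 : ℕ) := by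
        funext k
        rw [Real.rpow_two]
      rw [h4]
      exact (hsum h).tsum_eq
    calc ‖Vlin h‖ = Real.sqrt (‖Vlin h‖ ^ 2) := (Real.sqrt_sq (norm_nonneg _)).symm
    _ = Real.sqrt (‖h‖ ^ 2) := by rw [h3]
    _ = ‖h‖ := Real.sqrt_sq (norm_nonneg _)
  let v : H →L[ℂ] lp (fun _ : ℕ => H) 2 :=
    Vlin.mkContinuous 1 (fun h => by rw [hVnorm h, one_mul])
  have hvapp : ∀ (h : H) (k : ℕ), v h k
      = ((Real.sqrt ((m + k - 1).choose k) : ℝ) : ℂ) • D (((adjoint T) ^ k) h) :=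
    fun h k => rfl
  refine ⟨v, hvapp, fun h => hVnorm h, ?_⟩
  apply ContinuousLinearMap.ext
  intro h
  apply lp.ext
  funext k
  rw [ContinuousLinearMap.comp_apply, ContinuousLinearMap.comp_apply, hW (v h) k,
    hvapp (adjoint T h) k, hvapp h (k + 1)]
  have e1 : ((adjoint T) ^ k) ((adjoint T) h) = ((adjoint T) ^ (k + 1)) h := by
    rw [pow_succ, ContinuousLinearMap.mul_apply]
  rw [e1, smul_smul, ← Complex.ofReal_mul]
  have e3 : m + (k + 1) - 1 = m + k := by omega
  rw [e3]
  congr 2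
  have hnat : (m + k) * ((m + k - 1).choose k) = ((m + k).choose (k + 1)) * (k + 1) := by
    have h5 := Nat.add_one_mul_choose_eq (m + k - 1) k
    have h4 : (m + k - 1) + 1 = m + k := by omega
    rw [h4] at h5
    exact h5
  have hr : ((m : ℝ) + k) * (((m + k - 1).choose k : ℕ) : ℝ)
      = (((m + k).choose (k + 1) : ℕ) : ℝ) * ((k : ℝ) + 1) := by
    exact_mod_cast hnat
  have hne : ((k : ℝ) + m) ≠ 0 := by positivity
  rw [← Real.sqrt_mul (by positivity)]
  congr 1
  rw [div_mul_eq_mul_div, eq_div_iff hne]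
  push_cast
  push_cast at hr
  nlinarith [hr]
end
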